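/- Let H be a separable complex Hilbert space, M a von Neumann algebra on H, and {α_t}_{t≥0} an e₀-semigroup on M, i.e. α_0 = id, α_s ∘ α_t = α_{s+t}, and each α_t : M → M is a unital normal *-endomorphism. Suppose that for each a ∈ M the map t ↦ α_t(a) is WOT-continuous at every t > 0. Then the following are equivalent: (i) for each a ∈ M the map t ↦ α_t(a) is WOT-continuous at t = 0; (ii) ⋂_{t>0} ker α_t = {0}. -/

import Mathlib

open scoped NNReal

/-- The weak operator topology on the bounded operators of a complex Hilbert space:
the topology induced by the matrix coefficients `T ↦ ⟪T x, y⟫`. -/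
noncomputable def wotCLM (H : Type*) [NormedAddCommGroup H] [InnerProductSpace ℂ H] :
    TopologicalSpace (H →L[ℂ] H) :=
  TopologicalSpace.induced
    (fun T => fun p : H × H => (inner ℂ (T p.1) p.2 : ℂ)) Pi.topologicalSpace

/-- The strong operator topology on the bounded operators of a complex Hilbert space:
the topology of pointwise norm-convergence. -/
def sotCLM (H : Type*) [NormedAddCommGroup H] [InnerProductSpace ℂ H] :
    TopologicalSpace (H →L[ℂ] H) :=
  TopologicalSpace.induced (fun T => fun h : H => T h) Pi.topologicalSpace

/-- The weak operator topology on a von Neumann algebra (as a set of operators). -/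
noncomputable def wotvN (H : Type*) [NormedAddCommGroup H] [InnerProductSpace ℂ H] [CompleteSpace H]
    (M : VonNeumannAlgebra H) : TopologicalSpace ↥M :=
  TopologicalSpace.induced (fun a : ↥M => (a : H →L[ℂ] H)) (wotCLM H)

/-- The strong operator topology on a von Neumann algebra (as a set of operators). -/
def sotvN (H : Type*) [NormedAddCommGroup H] [InnerProductSpace ℂ H] [CompleteSpace H]
    (M : VonNeumannAlgebra H) : TopologicalSpace ↥M :=
  TopologicalSpace.induced (fun a : ↥M => (a : H →L[ℂ] H)) (sotCLM H)

/-- The elements of a von Neumann algebra form a `ℂ`-algebra. -/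
noncomputable instance vNAlgebra (H : Type*) [NormedAddCommGroup H] [InnerProductSpace ℂ H]
    [CompleteSpace H] (M : VonNeumannAlgebra H) : Algebra ℂ ↥M :=
  Subalgebra.algebra M.toStarSubalgebra.toSubalgebra

/-! ### Auxiliary material -/

open Filter Topology Set

section Aux

variable {H : Type*} [NormedAddCommGroup H] [InnerProductSpace ℂ H]

/-- The coefficient map realizing the WOT as an induced topology. -/
noncomputable def wotEmb (H : Type*) [NormedAddCommGroup H] [InnerProductSpace ℂ H] :
    (H →L[ℂ] H) → (H × H → ℂ) :=
  fun T => fun p : H × H => (inner ℂ (T p.1) p.2 : ℂ)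

lemma wotEmb_injective : Function.Injective (wotEmb H) := by
  intro T S h
  ext x
  refine ext_inner_right ℂ fun y => ?_
  exact congrFun h (x, y)

lemma wot_isInducing :
    @Topology.IsInducing _ _ (wotCLM H) _ (wotEmb H) :=
  @Topology.IsInducing.mk _ _ (wotCLM H) _ (wotEmb H) rfl

lemma wot_isEmbedding :
    @Topology.IsEmbedding _ _ (wotCLM H) _ (wotEmb H) :=
  @Topology.IsEmbedding.mk _ _ (wotCLM H) _ (wotEmb H) wot_isInducing wotEmb_injective

lemma wot_t2 : @T2Space _ (wotCLM H) := by
  letI := wotCLM H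
  exact wot_isEmbedding.t2Space

lemma wotvN_t2 [CompleteSpace H] (M : VonNeumannAlgebra H) : @T2Space ↥M (wotvN H M) := by
  letI := wotCLM H
  letI : TopologicalSpace ↥M := wotvN H M
  haveI : T2Space (H →L[ℂ] H) := wot_t2
  have hemb : Topology.IsEmbedding (fun a : ↥M => (a : H →L[ℂ] H)) :=
    ⟨⟨rfl⟩, Subtype.val_injective⟩
  exact hemb.t2Space

lemma wot_coeff_continuous (x y : H) :
    @Continuous _ _ (wotCLM H) _ (fun T : H →L[ℂ] H => (inner ℂ (T x) y : ℂ)) := by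
  letI := wotCLM H
  exact (continuous_apply ((x, y) : H × H)).comp wot_isInducing.continuous

lemma wot_centralizer_isClosed [CompleteSpace H] (s : Set (H →L[ℂ] H)) :
    @IsClosed _ (wotCLM H) (Set.centralizer s) := by
  letI := wotCLM H
  have hrw : Set.centralizer s = ⋂ m ∈ s, ⋂ (x : H), ⋂ (y : H),
      {T : H →L[ℂ] H |
        (inner ℂ (T x) ((ContinuousLinearMap.adjoint m) y) : ℂ) = inner ℂ (T (m x)) y} := by
    ext T
    simp only [Set.mem_centralizer_iff, Set.mem_iInter, Set.mem_setOf_eq]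
    constructor
    · intro h m hm x y
      rw [ContinuousLinearMap.adjoint_inner_right]
      have : m * T = T * m := h m hm
      have hx : m (T x) = T (m x) := by
        have := congrFun (congrArg DFunLike.coe this) x
        simpa using this
      rw [hx]
    · intro h m hm
      ext x
      refine ext_inner_right ℂ fun y => ?_
      have := h m hm x y
      rw [ContinuousLinearMap.adjoint_inner_right] at this
      simpa using this
  rw [hrw]
  refine isClosed_biInter fun m _ => isClosed_iInter fun x => isClosed_iInter fun y => ?_
  exact isClosed_eq (wot_coeff_continuous x _) (wot_coeff_continuous _ y)

lemma vN_wot_isClosed [CompleteSpace H] (M : VonNeumannAlgebra H) :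
    @IsClosed _ (wotCLM H) (M : Set (H →L[ℂ] H)) := by
  rw [← M.centralizer_centralizer]
  exact wot_centralizer_isClosed _

lemma vN_completeSpace [CompleteSpace H] (M : VonNeumannAlgebra H) : CompleteSpace ↥M := by
  have hgen : ∀ s : Set (H →L[ℂ] H), IsClosed (Set.centralizer s) := by
    intro s
    have hrw : Set.centralizer s = ⋂ m ∈ s, {T : H →L[ℂ] H | m * T = T * m} := by
      ext T
      simp only [Set.mem_centralizer_iff, Set.mem_iInter, Set.mem_setOf_eq]
    rw [hrw]
    exact isClosed_biInter fun m _ =>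
      isClosed_eq (continuous_mul_left m) (continuous_mul_right m)
  have h1 : IsClosed (M : Set (H →L[ℂ] H)) := by
    rw [← M.centralizer_centralizer]
    exact hgen _
  exact h1.completeSpace_coe

/-- The C⋆-algebra structure on a von Neumann algebra. -/
noncomputable def vNCStar [CompleteSpace H] (M : VonNeumannAlgebra H) : CStarAlgebra ↥M :=
  letI := vN_completeSpace M
  { (inferInstance : NormedRing ↥M), (inferInstance : StarRing ↥M),
    (M.toStarSubalgebra.toNormedAlgebra : NormedAlgebra ℂ ↥M),
    (M.toStarSubalgebra.starModule : StarModule ℂ ↥M),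
    (inferInstance : CompleteSpace ↥M) with
    toCStarRing := ⟨fun x => CStarRing.norm_mul_self_le (x := (x : H →L[ℂ] H))⟩ }

/-- The candidate set of coefficient functions of operators of norm at most one. -/
def wotBallSet (H : Type*) [NormedAddCommGroup H] [InnerProductSpace ℂ H] :
    Set (H × H → ℂ) :=
  {g | (∀ x y z : H, g (x, y + z) = g (x, y) + g (x, z)) ∧
       (∀ (c : ℂ) (x y : H), g (x, c • y) = c * g (x, y)) ∧
       (∀ x x' y : H, g (x + x', y) = g (x, y) + g (x', y)) ∧
       (∀ (c : ℂ) (x y : H), g (c • x, y) = (starRingEnd ℂ) c * g (x, y)) ∧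
       (∀ x y : H, ‖g (x, y)‖ ≤ ‖x‖ * ‖y‖)}

lemma wotEmb_image_ball [CompleteSpace H] :
    wotEmb H '' {T : H →L[ℂ] H | ‖T‖ ≤ 1} = wotBallSet H := by
  apply Set.Subset.antisymm
  · rintro _ ⟨T, hT, rfl⟩
    refine ⟨fun x y z => ?_, fun c x y => ?_, fun x x' y => ?_, fun c x y => ?_, fun x y => ?_⟩
    · simp [wotEmb, inner_add_right]
    · simp [wotEmb, inner_smul_right]
    · simp [wotEmb, inner_add_left]
    · simp [wotEmb, inner_smul_left, mul_comm]
    · calc ‖(inner ℂ (T x) y : ℂ)‖ ≤ ‖T x‖ * ‖y‖ := norm_inner_le_norm _ _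
        _ ≤ ‖x‖ * ‖y‖ := by
            have hT' : ‖T‖ ≤ 1 := hT
            have h1 : ‖T x‖ ≤ ‖x‖ := by
              calc ‖T x‖ ≤ ‖T‖ * ‖x‖ := T.le_opNorm x
                _ ≤ 1 * ‖x‖ := mul_le_mul_of_nonneg_right hT' (norm_nonneg x)
                _ = ‖x‖ := one_mul _
            exact mul_le_mul_of_nonneg_right h1 (norm_nonneg y)
  · rintro g ⟨h1, h2, h3, h4, h5⟩
    set L : H → (H →L[ℂ] ℂ) := fun x =>
      LinearMap.mkContinuous
        { toFun := fun y => g (x, y)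
          map_add' := fun y z => h1 x y z
          map_smul' := fun c y => h2 c x y } ‖x‖ (fun y => h5 x y) with hL
    have hLapp : ∀ x y, L x y = g (x, y) := fun x y => rfl
    have hLnorm : ∀ x, ‖L x‖ ≤ ‖x‖ := fun x =>
      LinearMap.mkContinuous_norm_le _ (norm_nonneg x) _
    set u : H → H := fun x => (InnerProductSpace.toDual ℂ H).symm (L x) with hu'
    have hu : ∀ x y, (inner ℂ (u x) y : ℂ) = g (x, y) := by
      intro x y
      calc (inner ℂ (u x) y : ℂ) = (InnerProductSpace.toDual ℂ H) (u x) y := by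
            rw [InnerProductSpace.toDual_apply_apply]
        _ = L x y := by rw [hu', LinearIsometryEquiv.apply_symm_apply]
        _ = g (x, y) := rfl
    have hadd : ∀ x x', u (x + x') = u x + u x' := by
      intro x x'
      refine ext_inner_right ℂ fun v => ?_
      rw [inner_add_left, hu, hu, hu, h3]
    have hsmul : ∀ (c : ℂ) (x : H), u (c • x) = c • u x := by
      intro c x
      refine ext_inner_right ℂ fun v => ?_
      rw [hu, inner_smul_left, hu, h4]
    set T : H →ₗ[ℂ] H := { toFun := u, map_add' := hadd, map_smul' := hsmul } with hT
    have hTb : ∀ x, ‖T x‖ ≤ 1 * ‖x‖ := by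
      intro x
      rw [one_mul]
      calc ‖u x‖ = ‖L x‖ := LinearIsometryEquiv.norm_map _ _
        _ ≤ ‖x‖ := hLnorm x
    refine ⟨LinearMap.mkContinuous T 1 hTb, ?_, ?_⟩
    · exact LinearMap.mkContinuous_norm_le _ zero_le_one _
    · funext p
      exact hu p.1 p.2

lemma wotBallSet_isClosed : IsClosed (wotBallSet H) := by
  rw [wotBallSet]
  simp only [Set.setOf_and, Set.setOf_forall]
  refine IsClosed.inter (isClosed_iInter fun x => isClosed_iInter fun y =>
      isClosed_iInter fun z =>
      isClosed_eq (continuous_apply (x, y + z))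
        ((continuous_apply (x, y)).add (continuous_apply (x, z))))
    (IsClosed.inter (isClosed_iInter fun c => isClosed_iInter fun x => isClosed_iInter fun y =>
      isClosed_eq (continuous_apply (x, c • y)) (continuous_const.mul (continuous_apply (x, y))))
    (IsClosed.inter (isClosed_iInter fun x => isClosed_iInter fun x' => isClosed_iInter fun y =>
      isClosed_eq (continuous_apply (x + x', y))
        ((continuous_apply (x, y)).add (continuous_apply (x', y))))
    (IsClosed.inter (isClosed_iInter fun c => isClosed_iInter fun x => isClosed_iInter fun y =>
      isClosed_eq (continuous_apply (c • x, y)) (continuous_const.mul (continuous_apply (x, y))))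
    (isClosed_iInter fun x => isClosed_iInter fun y =>
      isClosed_le (Continuous.norm (continuous_apply (x, y))) continuous_const))))

lemma wot_ball_isCompact [CompleteSpace H] :
    @IsCompact _ (wotCLM H) {T : H →L[ℂ] H | ‖T‖ ≤ 1} := by
  letI := wotCLM H
  rw [wot_isEmbedding.isCompact_iff, wotEmb_image_ball]
  have hsub : wotBallSet H ⊆
      Set.pi Set.univ (fun p : H × H => Metric.closedBall (0 : ℂ) (‖p.1‖ * ‖p.2‖)) := by
    rintro g ⟨-, -, -, -, h5⟩ p -
    simpa [Metric.mem_closedBall, dist_zero_right] using h5 p.1 p.2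
  exact IsCompact.of_isClosed_subset
    (isCompact_univ_pi fun p => isCompact_closedBall _ _) wotBallSet_isClosed hsub

lemma vN_ball_isCompact [CompleteSpace H] (M : VonNeumannAlgebra H) :
    @IsCompact ↥M (wotvN H M) {a : ↥M | ‖(a : H →L[ℂ] H)‖ ≤ 1} := by
  letI := wotCLM H
  letI : TopologicalSpace ↥M := wotvN H M
  have hemb : Topology.IsEmbedding (fun a : ↥M => (a : H →L[ℂ] H)) :=
    ⟨⟨rfl⟩, Subtype.val_injective⟩
  rw [hemb.isCompact_iff]
  have himg : (fun a : ↥M => (a : H →L[ℂ] H)) '' {a : ↥M | ‖(a : H →L[ℂ] H)‖ ≤ 1}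
      = (M : Set (H →L[ℂ] H)) ∩ {T : H →L[ℂ] H | ‖T‖ ≤ 1} := by
    ext T
    constructor
    · rintro ⟨a, ha, rfl⟩
      exact ⟨a.2, ha⟩
    · rintro ⟨hm, hn⟩
      exact ⟨⟨T, hm⟩, hn, rfl⟩
  rw [himg]
  exact wot_ball_isCompact.inter_left (vN_wot_isClosed M)

lemma wot_smul_continuous (c : ℂ) :
    @Continuous _ _ (wotCLM H) (wotCLM H) (fun T : H →L[ℂ] H => c • T) := by
  letI := wotCLM H
  rw [wot_isInducing.continuous_iff]
  have hfun : (wotEmb H ∘ fun T : H →L[ℂ] H => c • T)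
      = fun T p => (starRingEnd ℂ) c * wotEmb H T p := by
    funext T p
    simp [wotEmb, inner_smul_left, mul_comm]
  rw [hfun]
  exact continuous_pi fun p =>
    continuous_const.mul ((continuous_apply p).comp wot_isInducing.continuous)

lemma vN_smul_continuous [CompleteSpace H] (M : VonNeumannAlgebra H) (c : ℂ) :
    @Continuous ↥M ↥M (wotvN H M) (wotvN H M) (fun a : ↥M => c • a) := by
  letI := wotCLM H
  letI : TopologicalSpace ↥M := wotvN H M
  have hind : Topology.IsInducing (fun a : ↥M => (a : H →L[ℂ] H)) := ⟨rfl⟩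
  rw [hind.continuous_iff]
  have hfun : ((fun a : ↥M => (a : H →L[ℂ] H)) ∘ fun a : ↥M => c • a)
      = (fun T : H →L[ℂ] H => c • T) ∘ fun a : ↥M => (a : H →L[ℂ] H) := rfl
  rw [hfun]
  exact (wot_smul_continuous c).comp hind.continuous

lemma nhds_zero_nnreal : 𝓝 (0 : ℝ≥0) = 𝓝[>] (0 : ℝ≥0) ⊔ pure 0 := by
  have h1 : ({(0 : ℝ≥0)}ᶜ : Set ℝ≥0) = Set.Ioi 0 := by
    ext x; simp [pos_iff_ne_zero]
  rw [← nhdsNE_sup_pure (0 : ℝ≥0), h1]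

end Aux

/-- For an e₀-semigroup on a von Neumann algebra on a separable Hilbert space which is
pointwise WOT-continuous at every `t > 0`, pointwise WOT-continuity at `t = 0` is
equivalent to `⋂_{t>0} ker α_t = {0}`. -/
theorem stmt18 (H : Type) [NormedAddCommGroup H] [InnerProductSpace ℂ H] [CompleteSpace H]
    [TopologicalSpace.SeparableSpace H] (M : VonNeumannAlgebra H)
    (α : ℝ≥0 → (↥M →⋆ₐ[ℂ] ↥M))
    (hα0 : α 0 = StarAlgHom.id ℂ ↥M)
    (hadd : ∀ s t : ℝ≥0, α (s + t) = (α s).comp (α t))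
    -- each `α t` is normal: WOT-continuous on the closed unit ball
    (hnormal : ∀ t : ℝ≥0, @ContinuousOn ↥M ↥M (wotvN H M) (wotvN H M) (α t)
      {a : ↥M | ‖(a : H →L[ℂ] H)‖ ≤ 1})
    -- `t ↦ α t a` is WOT-continuous at every `t > 0`
    (hcont : ∀ (a : ↥M) (t : ℝ≥0), 0 < t →
      @ContinuousAt ℝ≥0 ↥M _ (wotvN H M) (fun s => α s a) t) :
    (∀ a : ↥M, @ContinuousAt ℝ≥0 ↥M _ (wotvN H M) (fun s => α s a) 0) ↔
      (⋂ t ∈ Set.Ioi (0 : ℝ≥0), {a : ↥M | α t a = 0}) = {0} := by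
  letI : CStarAlgebra ↥M := vNCStar M
  letI : TopologicalSpace ↥M := wotvN H M
  haveI : T2Space ↥M := wotvN_t2 M
  have hcontr : ∀ (t : ℝ≥0) (a : ↥M), ‖((α t a : ↥M) : H →L[ℂ] H)‖ ≤ ‖(a : H →L[ℂ] H)‖ :=
    fun t a => NonUnitalStarAlgHom.norm_apply_le (α t) a
  have hf0 : ∀ a : ↥M, α 0 a = a := fun a => by rw [hα0]; rfl
  constructor
  · -- continuity at 0 implies trivial intersection of kernels
    intro h
    apply Set.Subset.antisymm
    · intro a ha
      simp only [Set.mem_iInter, Set.mem_setOf_eq, Set.mem_Ioi] at ha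
      have h1 : Filter.Tendsto (fun s => α s a) (𝓝[>] (0 : ℝ≥0)) (𝓝 a) := by
        have h2 : Filter.Tendsto (fun s => α s a) (𝓝 (0 : ℝ≥0))
            (𝓝 ((fun s => α s a) 0)) := h a
        have h3 := h2.mono_left (nhdsWithin_le_nhds (s := Set.Ioi (0 : ℝ≥0)))
        exact h3.mono_right (le_of_eq (by simp only [hf0]))
      have h2 : Filter.Tendsto (fun s => α s a) (𝓝[>] (0 : ℝ≥0)) (𝓝 (0 : ↥M)) := by
        have heq : ∀ᶠ s in 𝓝[>] (0 : ℝ≥0), α s a = (0 : ↥M) := by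
          filter_upwards [self_mem_nhdsWithin] with s hs
          exact ha s hs
        exact Filter.Tendsto.congr' (Filter.EventuallyEq.symm heq) tendsto_const_nhds
      have : a = 0 := tendsto_nhds_unique h1 h2
      rw [Set.mem_singleton_iff]
      exact this
    · intro a ha
      simp only [Set.mem_singleton_iff] at ha
      subst ha
      simp only [Set.mem_iInter, Set.mem_setOf_eq]
      intro t _
      exact map_zero (α t)
  · -- trivial intersection of kernels implies continuity at 0
    intro hker
    -- first for elements in the unit ball
    have key : ∀ a : ↥M, ‖(a : H →L[ℂ] H)‖ ≤ 1 →
        Filter.Tendsto (fun s => α s a) (𝓝 (0 : ℝ≥0)) (𝓝 a) := by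
      intro a ha
      rw [nhds_zero_nnreal, Filter.tendsto_sup]
      constructor
      · -- along `𝓝[>] 0` use compactness
        rw [Filter.tendsto_iff_ultrafilter]
        intro U hU
        set f : ℝ≥0 → ↥M := fun s => α s a with hfdef
        set S : Set ↥M := {b : ↥M | ‖(b : H →L[ℂ] H)‖ ≤ 1} with hSdef
        have hmem : ∀ s, f s ∈ S := fun s => le_trans (hcontr s a) ha
        have hS : IsCompact S := vN_ball_isCompact M
        have hUS : ↑(Ultrafilter.map f U) ≤ Filter.principal S := by
          rw [Ultrafilter.coe_map, Filter.le_principal_iff, Filter.mem_map]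
          exact Filter.univ_mem' hmem
        obtain ⟨b, hbS, hb⟩ := hS.ultrafilter_le_nhds (Ultrafilter.map f U) hUS
        have hfb : Filter.Tendsto f ↑U (𝓝 b) := by
          rwa [Ultrafilter.coe_map] at hb
        have hfS : Filter.Tendsto f ↑U (𝓝[S] b) := by
          rw [nhdsWithin, Filter.tendsto_inf]
          refine ⟨hfb, ?_⟩
          rw [Filter.tendsto_principal]
          exact Filter.Eventually.of_forall hmem
        have hkey : ∀ t : ℝ≥0, 0 < t → α t b = α t a := by
          intro t ht
          have hcw : Filter.Tendsto (α t) (𝓝[S] b) (𝓝 (α t b)) := hnormal t b hbS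
          have T1 : Filter.Tendsto (fun s => α t (f s)) ↑U (𝓝 (α t b)) := hcw.comp hfS
          have hfun : (fun s => α t (f s)) = fun s => α (t + s) a := by
            funext s
            exact (DFunLike.congr_fun (hadd t s) a).symm
          have haddt : Filter.Tendsto (fun s : ℝ≥0 => t + s) ↑U (𝓝 t) := by
            have h4 : Filter.Tendsto (fun s : ℝ≥0 => t + s) (𝓝 0) (𝓝 (t + 0)) :=
              (continuous_add_left t).tendsto 0
            rw [add_zero] at h4
            exact h4.mono_left (hU.trans (nhdsWithin_le_nhds (s := Set.Ioi (0 : ℝ≥0))))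
          have T2 : Filter.Tendsto (fun s => α t (f s)) ↑U (𝓝 (α t a)) := by
            rw [hfun]
            exact Filter.Tendsto.comp (hcont a t ht) haddt
          exact tendsto_nhds_unique T1 T2
        have hba : b - a ∈ ⋂ t ∈ Set.Ioi (0 : ℝ≥0), {c : ↥M | α t c = 0} := by
          refine Set.mem_iInter₂.2 fun t ht => ?_
          simp only [Set.mem_setOf_eq, map_sub, hkey t ht, sub_self]
        rw [hker, Set.mem_singleton_iff, sub_eq_zero] at hba
        rw [← hba]
        exact hfb
      · exact (tendsto_pure_nhds (fun s => α s a) 0).mono_right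
          (le_of_eq (by simp only [hf0]))
    intro a
    by_cases haz : a = 0
    · subst haz
      rw [ContinuousAt, map_zero]
      exact Filter.Tendsto.congr (fun s => (map_zero (α s)).symm) tendsto_const_nhds
    · -- scale into the unit ball
      have hanorm : (0 : ℝ) < ‖(a : H →L[ℂ] H)‖ := by
        rw [norm_pos_iff]
        intro hc
        apply haz
        exact Subtype.ext hc
      set c : ℂ := (‖(a : H →L[ℂ] H)‖ : ℂ) with hc
      have hc0 : c ≠ 0 := by
        simp [hc, ne_of_gt hanorm]
      set a₁ : ↥M := c⁻¹ • a with ha₁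
      have hnorm₁ : ‖((a₁ : ↥M) : H →L[ℂ] H)‖ ≤ 1 := by
        have : ((a₁ : ↥M) : H →L[ℂ] H) = c⁻¹ • (a : H →L[ℂ] H) := rfl
        rw [this, norm_smul]
        simp [hc, norm_inv]
        rw [inv_mul_cancel₀ (ne_of_gt hanorm)]
      have hta : Filter.Tendsto (fun s => α s a₁) (𝓝 (0 : ℝ≥0)) (𝓝 a₁) := key a₁ hnorm₁
      have hsc : Filter.Tendsto (fun s => c • α s a₁) (𝓝 (0 : ℝ≥0)) (𝓝 (c • a₁)) :=
        ((vN_smul_continuous M c).tendsto a₁).comp hta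
      have hca : c • a₁ = a := by
        rw [ha₁, smul_smul, mul_inv_cancel₀ hc0, one_smul]
      have hfun : (fun s => c • α s a₁) = fun s => α s a := by
        funext s
        rw [← map_smul (α s), hca]
      rw [hfun, hca] at hsc
      rw [ContinuousAt]
      exact hsc.mono_right (le_of_eq (by simp only [hf0]))
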